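/- Let J : Δ → R be concave on the probability simplex Δ ⊆ R^n, let r : Y → R^n be a measurable map with nonnegative components (the likelihood vector), let P be a column-stochastic n×n matrix, and suppose ∫_Y (1^T diag(r(y)) p) dμ(y) = 1 for all p ∈ Δ. Then the map p ↦ ∫_Y (1^T diag(r(y)) p) · J( P diag(r(y)) p / (1^T diag(r(y)) p) ) dμ(y) is concave on Δ, where the integrand is interpreted as 0 when 1^T diag(r(y)) p = 0. -/

import Mathlib

open MeasureTheory

/-- The probability simplex in `ℝⁿ`. -/
def simplex (n : ℕ) : Set (Fin n → ℝ) :=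
  {p | (∀ i, 0 ≤ p i) ∧ ∑ i, p i = 1}

/-- Bayes-operator concavity preservation: if `J` is concave on the simplex, `r` is a
nonnegative measurable likelihood vector, `P` is column-stochastic, and the predictive
likelihood normalizes, then `p ↦ ∫ (1ᵀ diag(r(y)) p) · J(P diag(r(y)) p / (1ᵀ diag(r(y)) p)) dμ`
is concave on the simplex (the integrand being `0` when the normalizer vanishes). -/
theorem stmt_10 {n : ℕ} {Y : Type*} [MeasurableSpace Y] (μ : Measure Y) [SigmaFinite μ]
    (r : Y → Fin n → ℝ) (hr : Measurable r) (hrpos : ∀ y i, 0 ≤ r y i)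
    (P : Matrix (Fin n) (Fin n) ℝ) (hP0 : ∀ i j, 0 ≤ P i j)
    (hPcol : ∀ j, ∑ i, P i j = 1)
    (J : (Fin n → ℝ) → ℝ) (hJ : ConcaveOn ℝ (simplex n) J)
    (hnorm : ∀ p ∈ simplex n, ∫ y, (∑ j, r y j * p j) ∂μ = 1)
    (hint : ∀ p ∈ simplex n,
      Integrable (fun y =>
        if h : (∑ j, r y j * p j) = 0 then 0
        else (∑ j, r y j * p j) *
          J (fun i => (∑ j, P i j * (r y j * p j)) / (∑ j, r y j * p j))) μ) :
    ConcaveOn ℝ (simplex n) (fun p =>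
      ∫ y,
        (if h : (∑ j, r y j * p j) = 0 then 0
         else (∑ j, r y j * p j) *
           J (fun i => (∑ j, P i j * (r y j * p j)) / (∑ j, r y j * p j))) ∂μ) := by
  classical
  set F : (Fin n → ℝ) → Y → ℝ := fun p y =>
    if h : (∑ j, r y j * p j) = 0 then 0
    else (∑ j, r y j * p j) *
      J (fun i => (∑ j, P i j * (r y j * p j)) / (∑ j, r y j * p j)) with hF
  -- membership of normalized posterior in the simplex
  have hpost : ∀ (y : Y) (p : Fin n → ℝ), (∀ i, 0 ≤ p i) → (∑ j, r y j * p j) ≠ 0 →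
      (fun i => (∑ j, P i j * (r y j * p j)) / (∑ j, r y j * p j)) ∈ simplex n := by
    intro y p hp hs
    have hterm : ∀ j, 0 ≤ r y j * p j := fun j => mul_nonneg (hrpos y j) (hp j)
    have hs0 : 0 ≤ ∑ j, r y j * p j := Finset.sum_nonneg fun j _ => hterm j
    constructor
    · intro i
      exact div_nonneg (Finset.sum_nonneg fun j _ => mul_nonneg (hP0 i j) (hterm j)) hs0
    · rw [← Finset.sum_div]
      rw [Finset.sum_comm]
      have : ∀ j, ∑ i, P i j * (r y j * p j) = r y j * p j := by
        intro j
        rw [← Finset.sum_mul, hPcol j, one_mul]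
      simp_rw [this]
      exact div_self hs
  have hcvx : Convex ℝ (simplex n) := by
    intro p hp q hq a b ha hb hab
    constructor
    · intro i
      have := add_nonneg (mul_nonneg ha (hp.1 i)) (mul_nonneg hb (hq.1 i))
      simpa using this
    · have : ∑ i, (a * p i + b * q i) = a * (∑ i, p i) + b * (∑ i, q i) := by
        rw [Finset.sum_add_distrib, Finset.mul_sum, Finset.mul_sum]
      simpa [this, hp.2, hq.2] using hab
  refine ⟨hcvx, ?_⟩
  intro p hp q hq a b ha hb hab
  have hz : a • p + b • q ∈ simplex n := hcvx hp hq ha hb hab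
  -- pointwise concavity
  have hpt : ∀ y, a * F p y + b * F q y ≤ F (a • p + b • q) y := by
    intro y
    set s1 := ∑ j, r y j * p j with hs1def
    set s2 := ∑ j, r y j * q j with hs2def
    have hterm1 : ∀ j, 0 ≤ r y j * p j := fun j => mul_nonneg (hrpos y j) (hp.1 j)
    have hterm2 : ∀ j, 0 ≤ r y j * q j := fun j => mul_nonneg (hrpos y j) (hq.1 j)
    have hs1nn : 0 ≤ s1 := Finset.sum_nonneg fun j _ => hterm1 j
    have hs2nn : 0 ≤ s2 := Finset.sum_nonneg fun j _ => hterm2 j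
    have hzs : (∑ j, r y j * (a • p + b • q) j) = a * s1 + b * s2 := by
      simp only [Pi.add_apply, Pi.smul_apply, smul_eq_mul, hs1def, hs2def,
        Finset.mul_sum]
      rw [← Finset.sum_add_distrib]
      congr 1; funext j; ring
    have hw : ∀ i, (∑ j, P i j * (r y j * (a • p + b • q) j)) =
        a * (∑ j, P i j * (r y j * p j)) + b * (∑ j, P i j * (r y j * q j)) := by
      intro i
      simp only [Pi.add_apply, Pi.smul_apply, smul_eq_mul, Finset.mul_sum]
      rw [← Finset.sum_add_distrib]
      congr 1; funext j; ring
    have hFp0 : s1 = 0 → F p y = 0 := by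
      intro h; simp only [hF]; rw [← hs1def, dif_pos h]
    have hFq0 : s2 = 0 → F q y = 0 := by
      intro h; simp only [hF]; rw [← hs2def, dif_pos h]
    have hFp1 : s1 ≠ 0 →
        F p y = s1 * J (fun i => (∑ j, P i j * (r y j * p j)) / s1) := by
      intro h; simp only [hF]; rw [← hs1def, dif_neg h]
    have hFq1 : s2 ≠ 0 →
        F q y = s2 * J (fun i => (∑ j, P i j * (r y j * q j)) / s2) := by
      intro h; simp only [hF]; rw [← hs2def, dif_neg h]
    by_cases hs : a * s1 + b * s2 = 0
    · -- combined normalizer vanishes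
      have h1 : a * s1 = 0 := by
        nlinarith [mul_nonneg ha hs1nn, mul_nonneg hb hs2nn]
      have h2 : b * s2 = 0 := by linarith
      have hzF : F (a • p + b • q) y = 0 := by
        simp only [hF, hzs]; rw [dif_pos hs]
      rw [hzF]
      have hap : a * F p y = 0 := by
        rcases mul_eq_zero.1 h1 with h | h
        · simp [h]
        · rw [hFp0 h, mul_zero]
      have hbq : b * F q y = 0 := by
        rcases mul_eq_zero.1 h2 with h | h
        · simp [h]
        · rw [hFq0 h, mul_zero]
      rw [hap, hbq]; norm_num
    · have hspos : 0 < a * s1 + b * s2 :=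
        lt_of_le_of_ne (add_nonneg (mul_nonneg ha hs1nn) (mul_nonneg hb hs2nn)) (Ne.symm hs)
      have hzF : F (a • p + b • q) y = (a * s1 + b * s2) *
          J (fun i => (a * (∑ j, P i j * (r y j * p j)) + b * (∑ j, P i j * (r y j * q j)))
            / (a * s1 + b * s2)) := by
        simp only [hF, hzs, hw]; rw [dif_neg hs]
      -- helper: vanishing numerator when s = 0
      have hwzero : ∀ (v : Fin n → ℝ), (∀ j, 0 ≤ r y j * v j) → (∑ j, r y j * v j) = 0 →
          ∀ i, (∑ j, P i j * (r y j * v j)) = 0 := by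
        intro v hv hsum i
        apply Finset.sum_eq_zero
        intro j _
        have : r y j * v j = 0 :=
          (Finset.sum_eq_zero_iff_of_nonneg (fun j _ => hv j)).1 hsum j (Finset.mem_univ j)
        rw [this, mul_zero]
      by_cases h1 : s1 = 0
      · -- then a*s1 = 0, so b*s2 ≠ 0
        have hbs2 : b * s2 ≠ 0 := by
          intro hc; apply hs; rw [h1, hc]; ring
        have hb0 : b ≠ 0 := fun hc => hbs2 (by rw [hc, zero_mul])
        have hs2 : s2 ≠ 0 := fun hc => hbs2 (by rw [hc, mul_zero])
        have hwz := hwzero p hterm1 h1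
        have harg : (fun i => (a * (∑ j, P i j * (r y j * p j)) + b * (∑ j, P i j * (r y j * q j)))
            / (a * s1 + b * s2)) = fun i => (∑ j, P i j * (r y j * q j)) / s2 := by
          funext i
          rw [hwz i, h1, mul_zero, zero_add, zero_add, mul_div_mul_left _ _ hb0]
        rw [hzF, harg, hFp0 h1, hFq1 hs2, h1, mul_zero, zero_add, zero_add, mul_assoc]
      · by_cases h2 : s2 = 0
        · have has1 : a * s1 ≠ 0 := by
            intro hc; apply hs; rw [h2, hc]; ring
          have ha0 : a ≠ 0 := fun hc => has1 (by rw [hc, zero_mul])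
          have hwz := hwzero q hterm2 h2
          have harg : (fun i => (a * (∑ j, P i j * (r y j * p j)) + b * (∑ j, P i j * (r y j * q j)))
              / (a * s1 + b * s2)) = fun i => (∑ j, P i j * (r y j * p j)) / s1 := by
            funext i
            rw [hwz i, h2, mul_zero, add_zero, add_zero, mul_div_mul_left _ _ ha0]
          rw [hzF, harg, hFq0 h2, hFp1 h1, h2, mul_zero, add_zero, add_zero, mul_assoc]
        · -- main case: both positive
          have hs1pos : 0 < s1 := lt_of_le_of_ne hs1nn (Ne.symm h1)
          have hs2pos : 0 < s2 := lt_of_le_of_ne hs2nn (Ne.symm h2)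
          set u1 : Fin n → ℝ := fun i => (∑ j, P i j * (r y j * p j)) / s1 with hu1
          set u2 : Fin n → ℝ := fun i => (∑ j, P i j * (r y j * q j)) / s2 with hu2
          have hu1m : u1 ∈ simplex n := hpost y p hp.1 h1
          have hu2m : u2 ∈ simplex n := hpost y q hq.1 h2
          set s := a * s1 + b * s2 with hsdef
          have hc1 : (0:ℝ) ≤ a * s1 / s := div_nonneg (mul_nonneg ha hs1nn) hspos.le
          have hc2 : (0:ℝ) ≤ b * s2 / s := div_nonneg (mul_nonneg hb hs2nn) hspos.le
          have hc12 : a * s1 / s + b * s2 / s = 1 := by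
            field_simp
            exact hsdef.symm
          have hkey := hJ.2 hu1m hu2m hc1 hc2 hc12
          have hcomb : (a * s1 / s) • u1 + (b * s2 / s) • u2 =
              fun i => (a * (∑ j, P i j * (r y j * p j)) + b * (∑ j, P i j * (r y j * q j))) / s := by
            funext i
            simp only [Pi.add_apply, Pi.smul_apply, smul_eq_mul, hu1, hu2]
            field_simp
          rw [hcomb] at hkey
          rw [hzF, hFp1 h1, hFq1 h2]
          calc a * (s1 * J u1) + b * (s2 * J u2)
              = s * ((a * s1 / s) • J u1 + (b * s2 / s) • J u2) := by
                simp only [smul_eq_mul]; field_simp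
            _ ≤ s * J (fun i => (a * (∑ j, P i j * (r y j * p j)) + b * (∑ j, P i j * (r y j * q j))) / s) :=
                mul_le_mul_of_nonneg_left hkey hspos.le
  -- integrate the pointwise inequality
  have hip : Integrable (F p) μ := hint p hp
  have hiq : Integrable (F q) μ := hint q hq
  have hiz : Integrable (F (a • p + b • q)) μ := hint (a • p + b • q) hz
  show a * ∫ y, F p y ∂μ + b * ∫ y, F q y ∂μ ≤ ∫ y, F (a • p + b • q) y ∂μ
  calc a * ∫ y, F p y ∂μ + b * ∫ y, F q y ∂μ
      = ∫ y, (a * F p y + b * F q y) ∂μ := by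
        rw [integral_add (hip.const_mul a) (hiq.const_mul b)]
        simp_rw [← smul_eq_mul]
        rw [integral_smul, integral_smul]
    _ ≤ ∫ y, F (a • p + b • q) y ∂μ :=
        integral_mono ((hip.const_mul a).add (hiq.const_mul b)) hiz hpt
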